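/- Let n₁ be the real 4-dimensional Lie algebra with basis e₁, e₂, e₃, e₄ and nonzero brackets ⁅e₂, e₄⁆ = e₁ and ⁅e₃, e₄⁆ = e₂ (all other brackets of basis elements zero, extended bilinearly and antisymmetrically). A linear endomorphism D of n₁ is a derivation of n₁ if and only if there exist real numbers μ₁₁, μ₁₂, μ₁₃, μ₁₄, μ₂₂, μ₂₄, μ₃₄ such that D e₁ = μ₁₁ e₁, D e₂ = μ₁₂ e₁ + μ₂₂ e₂, D e₃ = μ₁₃ e₁ + μ₁₂ e₂ + (2μ₂₂ − μ₁₁) e₃, and D e₄ = μ₁₄ e₁ + μ₂₄ e₂ + μ₃₄ e₃ + (μ₁₁ − μ₂₂) e₄. -/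

import Mathlib

private lemma indep4' {L : Type*} [AddCommGroup L] [Module ℝ L] (b : Module.Basis (Fin 4) ℝ L)
    (c0 c1 c2 c3 : ℝ) (h : c0 • b 0 + c1 • b 1 + c2 • b 2 + c3 • b 3 = 0) :
    c0 = 0 ∧ c1 = 0 ∧ c2 = 0 ∧ c3 = 0 := by
  have hli := Fintype.linearIndependent_iff.mp b.linearIndependent ![c0, c1, c2, c3]
  have hsum : ∑ i, (![c0, c1, c2, c3]) i • b i = 0 := by
    rw [Fin.sum_univ_four]; simpa using h
  have := hli hsum
  exact ⟨this 0, this 1, this 2, this 3⟩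

theorem stmt_13 {L : Type*} [LieRing L] [LieAlgebra ℝ L]
    (b : Module.Basis (Fin 4) ℝ L)
    (h12 : ⁅b 0, b 1⁆ = 0) (h13 : ⁅b 0, b 2⁆ = 0) (h14 : ⁅b 0, b 3⁆ = 0)
    (h23 : ⁅b 1, b 2⁆ = 0) (h24 : ⁅b 1, b 3⁆ = b 0) (h34 : ⁅b 2, b 3⁆ = b 1)
    (D : L →ₗ[ℝ] L) :
    (∀ x y : L, D ⁅x, y⁆ = ⁅D x, y⁆ + ⁅x, D y⁆) ↔
      ∃ μ11 μ12 μ13 μ14 μ22 μ24 μ34 : ℝ,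
        D (b 0) = μ11 • b 0 ∧
        D (b 1) = μ12 • b 0 + μ22 • b 1 ∧
        D (b 2) = μ13 • b 0 + μ12 • b 1 + (2 * μ22 - μ11) • b 2 ∧
        D (b 3) = μ14 • b 0 + μ24 • b 1 + μ34 • b 2 + (μ11 - μ22) • b 3 := by
  have h21 : ⁅b 1, b 0⁆ = 0 := by rw [← lie_skew, h12, neg_zero]
  have h31 : ⁅b 2, b 0⁆ = 0 := by rw [← lie_skew, h13, neg_zero]
  have h41 : ⁅b 3, b 0⁆ = 0 := by rw [← lie_skew, h14, neg_zero]
  have h32 : ⁅b 2, b 1⁆ = 0 := by rw [← lie_skew, h23, neg_zero]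
  have h42 : ⁅b 3, b 1⁆ = -b 0 := by rw [← lie_skew, h24]
  have h43 : ⁅b 3, b 2⁆ = -b 1 := by rw [← lie_skew, h34]
  constructor
  · intro hD
    set a : Fin 4 → Fin 4 → ℝ := fun i j => b.repr (D (b j)) i with ha
    have hDj : ∀ j, D (b j) = a 0 j • b 0 + a 1 j • b 1 + a 2 j • b 2 + a 3 j • b 3 := by
      intro j
      have := b.sum_repr (D (b j))
      rw [Fin.sum_univ_four] at this
      exact this.symm
    have E1 := hD (b 0) (b 3)
    have E2 := hD (b 0) (b 1)
    have E3 := hD (b 1) (b 3)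
    have E4 := hD (b 1) (b 2)
    have E5 := hD (b 2) (b 3)
    rw [h14, map_zero, hDj 0, hDj 3] at E1
    rw [h12, map_zero, hDj 0, hDj 1] at E2
    rw [h24, hDj 0, hDj 1, hDj 3] at E3
    rw [h23, map_zero, hDj 1, hDj 2] at E4
    rw [h34, hDj 1, hDj 2, hDj 3] at E5
    simp only [add_lie, lie_add, smul_lie, lie_smul, h12, h13, h14, h21, h23, h24, h31, h32, h34,
      h41, h42, h43, lie_self, smul_zero, add_zero, zero_add, smul_neg] at E1 E2 E3 E4 E5
    obtain ⟨k10, k20, -, -⟩ := indep4' b (a 1 0) (a 2 0) 0 0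
      (by linear_combination (norm := module) -E1)
    obtain ⟨k30, -, -, -⟩ := indep4' b (a 3 0) 0 0 0
      (by linear_combination (norm := module) E2)
    obtain ⟨k3a, k3b, -, -⟩ := indep4' b (a 0 0 - a 1 1 - a 3 3) (a 1 0 - a 2 1) (a 2 0) (a 3 0)
      (by linear_combination (norm := module) E3)
    obtain ⟨k32, k31n, -, -⟩ := indep4' b (a 3 2) (-(a 3 1)) 0 0
      (by linear_combination (norm := module) -E4)
    obtain ⟨k5a, k5b, -, -⟩ := indep4' b (a 0 1 - a 1 2) (a 1 1 - a 2 2 - a 3 3) (a 2 1) (a 3 1)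
      (by linear_combination (norm := module) E5)
    have ha31 : a 3 1 = 0 := neg_eq_zero.mp k31n
    have ha21 : a 2 1 = 0 := by linarith
    have ha12 : a 1 2 = a 0 1 := by linarith
    have ha22 : a 2 2 = 2 * a 1 1 - a 0 0 := by linarith
    have ha33 : a 3 3 = a 0 0 - a 1 1 := by linarith
    refine ⟨a 0 0, a 0 1, a 0 2, a 0 3, a 1 1, a 1 3, a 2 3, ?_, ?_, ?_, ?_⟩
    · rw [hDj 0, k10, k20, k30]; module
    · rw [hDj 1, ha21, ha31]; module
    · rw [hDj 2, ha12, ha22, k32]; module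
    · rw [hDj 3, ha33]
  · rintro ⟨μ11, μ12, μ13, μ14, μ22, μ24, μ34, hd0, hd1, hd2, hd3⟩ x y
    rw [← b.sum_repr x, ← b.sum_repr y]
    simp only [Fin.sum_univ_four, lie_add, add_lie, smul_lie, lie_smul, map_add, map_smul,
      h12, h13, h14, h21, h23, h24, h31, h32, h34, h41, h42, h43, lie_self,
      smul_zero, add_zero, zero_add, smul_neg, map_zero, map_neg, hd0, hd1, hd2, hd3]
    module
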